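/- For each primitive cube root of unity ζ, the sextic polynomial g_ζ = z₀⁵z₁ + ζ·z₂⁵z₀ + ζ²·z₁⁵z₂ satisfies: (i) the only common zero in ℂ³ of its three partial derivatives ∂g_ζ/∂z₀, ∂g_ζ/∂z₁, ∂g_ζ/∂z₂ is the origin (so the plane projective curve {g_ζ = 0} is smooth), and (ii) g_ζ(1, ω, ω²) = 0 for every cube root of unity ω, i.e. the curve {g_ζ = 0} contains all three fixed points of the cyclic projective transformation [z₀:z₁:z₂] ↦ [z₂:z₀:z₁]. -/
import Mathlib


open MvPolynomial

/-- The sextic `g_ζ = z₀⁵z₁ + ζ·z₂⁵z₀ + ζ²·z₁⁵z₂`. -/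
noncomputable def gSextic (ζ : ℂ) : MvPolynomial (Fin 3) ℂ :=
  X 0 ^ 5 * X 1 + C ζ * (X 2 ^ 5 * X 0) + C (ζ ^ 2) * (X 1 ^ 5 * X 2)

/-- For every primitive cube root of unity ζ:
(i) the only common zero in ℂ³ of the three partial derivatives of `g_ζ` is the origin
(so the plane projective curve `{g_ζ = 0}` is smooth), and
(ii) `g_ζ(1, ω, ω²) = 0` for every cube root of unity ω, i.e. the curve contains all three
fixed points of the cyclic projective transformation `[z₀:z₁:z₂] ↦ [z₂:z₀:z₁]`. -/
theorem gSextic_smooth_and_contains_tau_fixed_points (ζ : ℂ) (hζ : IsPrimitiveRoot ζ 3) :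
    (∀ v : Fin 3 → ℂ, (∀ i : Fin 3, eval v (pderiv i (gSextic ζ)) = 0) → v = 0) ∧
    (∀ ω : ℂ, ω ^ 3 = 1 → eval ![1, ω, ω ^ 2] (gSextic ζ) = 0) := by
  have hz3 : ζ ^ 3 = 1 := hζ.pow_eq_one
  have hζ0 : ζ ≠ 0 := hζ.ne_zero (by norm_num)
  have hζ1 : ζ ≠ 1 := hζ.ne_one (by norm_num)
  have hsum : 1 + ζ + ζ ^ 2 = 0 := by
    have hfac : (ζ - 1) * (1 + ζ + ζ ^ 2) = 0 := by linear_combination hz3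
    rcases mul_eq_zero.mp hfac with h | h
    · exact absurd (sub_eq_zero.mp h) hζ1
    · exact h
  constructor
  · intro v hv
    have e0 := hv 0; have e1 := hv 1; have e2 := hv 2
    simp only [gSextic, map_add, map_mul, Derivation.leibniz, Derivation.leibniz_pow,
      pderiv_X, pderiv_C, Pi.single_apply, smul_eq_mul, map_pow, eval_X, eval_C,
      map_nsmul, map_smul, map_mul, map_zero, mul_zero, zero_mul, add_zero, zero_add,
      if_true, if_false, Fin.isValue] at e0 e1 e2
    simp [gSextic, pderiv_mul, pderiv_pow, pderiv_X, Pi.single_apply] at e0 e1 e2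
    -- e0 : v 1 * (5 * v 0 ^ 4) + ζ * v 2 ^ 5 = 0
    -- e1 : v 0 ^ 5 + ζ ^ 2 * (v 2 * (5 * v 1 ^ 4)) = 0
    -- e2 : ζ * (v 0 * (5 * v 2 ^ 4)) + ζ ^ 2 * v 1 ^ 5 = 0
    have h1 : 5 * v 0 ^ 4 * v 1 = -(ζ * v 2 ^ 5) := by linear_combination e0
    have h2 : 5 * ζ ^ 2 * v 1 ^ 4 * v 2 = -(v 0 ^ 5) := by linear_combination e1
    have h3 : 5 * ζ * v 2 ^ 4 * v 0 = -(ζ ^ 2 * v 1 ^ 5) := by linear_combination e2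
    have p : (5 * v 0 ^ 4 * v 1) * (5 * ζ ^ 2 * v 1 ^ 4 * v 2) * (5 * ζ * v 2 ^ 4 * v 0)
        = (-(ζ * v 2 ^ 5)) * (-(v 0 ^ 5)) * (-(ζ ^ 2 * v 1 ^ 5)) := by
      rw [h1, h2, h3]
    have key : (126 : ℂ) * (v 0 * v 1 * v 2) ^ 5 = 0 := by
      linear_combination p - 126 * (v 0 * v 1 * v 2) ^ 5 * hz3
    have habc : v 0 * v 1 * v 2 = 0 := by
      have := mul_eq_zero.mp key
      rcases this with h | h
      · norm_num at h
      · exact pow_eq_zero_iff (by norm_num) |>.mp h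
    have hzero : v 0 = 0 ∧ v 1 = 0 ∧ v 2 = 0 := by
      rcases mul_eq_zero.mp habc with h | hc2
      · rcases mul_eq_zero.mp h with h0 | h1'
        · -- v 0 = 0
          have hc : v 2 = 0 := by
            have : ζ * v 2 ^ 5 = 0 := by linear_combination e0 - 5 * v 1 * v 0 ^ 3 * h0
            have := (mul_eq_zero.mp this).resolve_left hζ0
            exact pow_eq_zero_iff (by norm_num) |>.mp this
          have hb : v 1 = 0 := by
            have : ζ ^ 2 * v 1 ^ 5 = 0 := by linear_combination e2 - 5 * ζ * v 2 ^ 4 * h0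
            have := (mul_eq_zero.mp this).resolve_left (pow_ne_zero 2 hζ0)
            exact pow_eq_zero_iff (by norm_num) |>.mp this
          exact ⟨h0, hb, hc⟩
        · -- v 1 = 0
          have hc : v 2 = 0 := by
            have : ζ * v 2 ^ 5 = 0 := by linear_combination e0 - 5 * v 0 ^ 4 * h1'
            have := (mul_eq_zero.mp this).resolve_left hζ0
            exact pow_eq_zero_iff (by norm_num) |>.mp this
          have ha : v 0 = 0 := by
            have : v 0 ^ 5 = 0 := by linear_combination e1 - 5 * ζ ^ 2 * v 2 * v 1 ^ 3 * h1'
            exact pow_eq_zero_iff (by norm_num) |>.mp this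
          exact ⟨ha, h1', hc⟩
      · -- v 2 = 0
        have ha : v 0 = 0 := by
          have : v 0 ^ 5 = 0 := by linear_combination e1 - 5 * ζ ^ 2 * v 1 ^ 4 * hc2
          exact pow_eq_zero_iff (by norm_num) |>.mp this
        have hb : v 1 = 0 := by
          have : ζ ^ 2 * v 1 ^ 5 = 0 := by linear_combination e2 - 5 * ζ * v 0 * v 2 ^ 3 * hc2
          have := (mul_eq_zero.mp this).resolve_left (pow_ne_zero 2 hζ0)
          exact pow_eq_zero_iff (by norm_num) |>.mp this
        exact ⟨ha, hb, hc2⟩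
    funext i
    fin_cases i
    · exact hzero.1
    · exact hzero.2.1
    · exact hzero.2.2
  · intro ω hω
    simp [gSextic]
    linear_combination ω * hsum + (ζ * ω * (ω ^ 6 + ω ^ 3 + 1) + ζ ^ 2 * ω * (ω ^ 3 + 1)) * hω
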